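/- Let ρ be a density matrix on ℂ^d with spectral decomposition ρ = Σ_{x ∈ Fin d} p_x |x⟩⟨x| for an orthonormal eigenbasis {|x⟩}, and let S(ρ) = −Σ_x p_x log₂ p_x be its von Neumann entropy. For every ε > 0 and δ > 0 there exists N₀ ∈ ℕ such that for every N ≥ N₀ the typical projector satisfies Tr[ P_{N,ε} ρ^{⊗N} ] ≥ 1 − δ, where ρ^{⊗N} is the N-fold Kronecker (tensor) power of ρ. -/

import Mathlib

open Matrix
open scoped ComplexOrder

noncomputable section

/-- `N`-fold tensor (Kronecker) power of a matrix. -/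
def tpow {d : Type*} (ρ : Matrix d d ℂ) (N : ℕ) : Matrix (Fin N → d) (Fin N → d) ℂ :=
  Matrix.of fun a b => ∏ k, ρ (a k) (b k)

/-- The `ε`-typical set of length-`N` sequences for eigenvalues `p` and entropy `S`:
sequences with `2^{−N(S+ε)} ≤ Π_k p_{x_k} ≤ 2^{−N(S−ε)}`. -/
def typicalSet {ι : Type*} [Fintype ι] (p : ι → ℝ) (S : ℝ) (N : ℕ) (ε : ℝ) :
    Finset (Fin N → ι) :=
  Finset.univ.filter fun xs =>
    (2 : ℝ) ^ (-(N : ℝ) * (S + ε)) ≤ ∏ k, p (xs k) ∧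
      ∏ k, p (xs k) ≤ (2 : ℝ) ^ (-(N : ℝ) * (S - ε))

/-- The typical projector `Σ_{x⃗ ∈ T} |x₁⟩⟨x₁| ⊗ ⋯ ⊗ |x_N⟩⟨x_N|` built from eigenvectors `v`. -/
def typProj {ι d : Type*} {N : ℕ} (v : ι → (d → ℂ)) (T : Finset (Fin N → ι)) :
    Matrix (Fin N → d) (Fin N → d) ℂ :=
  ∑ xs ∈ T, Matrix.of fun a b => ∏ k, v (xs k) (a k) * star (v (xs k) (b k))

/-- Factorization of a sum over tuples of a product into a product of sums. -/
lemma sum_prod_fun {R : Type*} [CommSemiring R] {d N : ℕ} (H : Fin N → Fin d → R) :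
    ∑ xs : Fin N → Fin d, ∏ k, H k (xs k) = ∏ k, ∑ x, H k x := by
  rw [Finset.prod_univ_sum (fun _ => Finset.univ) H, Fintype.piFinset_univ]

/-- Asymptotic equipartition property (weak law of large numbers via Chebyshev). -/
lemma aep {d : ℕ} (p : Fin d → ℝ) (hp : ∀ x, 0 ≤ p x) (hsum : ∑ x, p x = 1)
    (S : ℝ) (hS : S = -∑ x, p x * Real.logb 2 (p x)) (ε δ : ℝ) (hε : 0 < ε) (hδ : 0 < δ) :
    ∃ N₀ : ℕ, ∀ N ≥ N₀, 1 - δ ≤ ∑ xs ∈ typicalSet p S N ε, ∏ k, p (xs k) := by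
  classical
  set g : Fin d → ℝ := fun x => -Real.logb 2 (p x) - S with hg
  have hmean : ∑ x, p x * g x = 0 := by
    have h1 : ∀ x, p x * g x = -(p x * Real.logb 2 (p x)) - p x * S := fun x => by
      simp only [hg]; ring
    rw [Finset.sum_congr rfl fun x _ => h1 x, Finset.sum_sub_distrib,
      Finset.sum_neg_distrib, ← Finset.sum_mul, hsum, hS]
    ring
  set V : ℝ := ∑ x, p x * (g x) ^ 2 with hV
  have hV0 : 0 ≤ V := Finset.sum_nonneg fun x _ => mul_nonneg (hp x) (sq_nonneg _)
  refine ⟨max 1 ⌈V / (δ * ε ^ 2)⌉₊, fun N hN => ?_⟩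
  have hN1 : 1 ≤ N := le_trans (le_max_left _ _) hN
  have hNpos : (0 : ℝ) < N := by exact_mod_cast hN1
  have hNV : V ≤ N * (δ * ε ^ 2) := by
    have h1 : V / (δ * ε ^ 2) ≤ (N : ℝ) := by
      calc V / (δ * ε ^ 2) ≤ (⌈V / (δ * ε ^ 2)⌉₊ : ℝ) := Nat.le_ceil _
        _ ≤ (N : ℝ) := by exact_mod_cast le_trans (le_max_right _ _) hN
    have hde : 0 < δ * ε ^ 2 := mul_pos hδ (pow_pos hε 2)
    calc V = V / (δ * ε ^ 2) * (δ * ε ^ 2) := by field_simp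
      _ ≤ N * (δ * ε ^ 2) := by
          exact mul_le_mul_of_nonneg_right h1 hde.le
  -- total mass is 1
  have total : ∑ xs : Fin N → Fin d, ∏ k, p (xs k) = 1 := by
    rw [sum_prod_fun (fun _ x => p x)]
    simp [hsum]
  -- second-moment identity (variance)
  have tkl : ∀ k l : Fin N,
      ∑ xs : Fin N → Fin d, (∏ m, p (xs m)) * (g (xs k) * g (xs l))
        = if k = l then V else 0 := by
    intro k l
    have step1 : ∀ xs : Fin N → Fin d,
        (∏ m, p (xs m)) * (g (xs k) * g (xs l))
          = ∏ m, (p (xs m) * (if m = k then g (xs m) else 1)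
              * (if m = l then g (xs m) else 1)) := by
      intro xs
      rw [Finset.prod_mul_distrib, Finset.prod_mul_distrib,
        Finset.prod_ite_eq' Finset.univ k (fun m => g (xs m)),
        Finset.prod_ite_eq' Finset.univ l (fun m => g (xs m))]
      simp [mul_assoc]
    rw [Finset.sum_congr rfl fun xs _ => step1 xs,
      sum_prod_fun (fun m x => p x * (if m = k then g x else 1) * (if m = l then g x else 1))]
    by_cases hkl : k = l
    · subst hkl
      have : ∀ m : Fin N, (∑ x, p x * (if m = k then g x else 1) * (if m = k then g x else 1))
          = if m = k then V else 1 := by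
        intro m
        by_cases hm : m = k
        · simp only [if_pos hm]
          rw [hV]
          exact Finset.sum_congr rfl fun x _ => by rw [pow_two, mul_assoc]
        · simp [hm, hsum]
      rw [Finset.prod_congr rfl fun m _ => this m, Finset.prod_ite_eq' Finset.univ k (fun _ => V)]
      simp
    · rw [if_neg hkl]
      apply Finset.prod_eq_zero (Finset.mem_univ k)
      simp only [if_pos rfl, if_neg hkl, mul_one]
      exact hmean
  have hvar : ∑ xs : Fin N → Fin d, (∏ m, p (xs m)) * (∑ k, g (xs k)) ^ 2
      = (N : ℝ) * V := by
    have expand : ∀ xs : Fin N → Fin d,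
        (∏ m, p (xs m)) * (∑ k, g (xs k)) ^ 2
          = ∑ k, ∑ l, (∏ m, p (xs m)) * (g (xs k) * g (xs l)) := by
      intro xs
      rw [pow_two, Finset.sum_mul_sum, Finset.mul_sum]
      exact Finset.sum_congr rfl fun k _ => by rw [Finset.mul_sum]
    rw [Finset.sum_congr rfl fun xs _ => expand xs, Finset.sum_comm]
    have inner : ∀ k : Fin N,
        (∑ xs : Fin N → Fin d, ∑ l, (∏ m, p (xs m)) * (g (xs k) * g (xs l))) = V := by
      intro k
      rw [Finset.sum_comm, Finset.sum_congr rfl fun l _ => tkl k l]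
      simp
    rw [Finset.sum_congr rfl fun k _ => inner k]
    simp [mul_comm]
  set T := typicalSet p S N ε with hT
  have key : ∀ xs ∉ T, (N : ℝ) ^ 2 * ε ^ 2 * (∏ k, p (xs k))
      ≤ (∏ m, p (xs m)) * (∑ k, g (xs k)) ^ 2 := by
    intro xs hxs
    by_cases hz : ∃ k, p (xs k) = 0
    · obtain ⟨k, hk⟩ := hz
      have h0 : (∏ k, p (xs k)) = 0 := Finset.prod_eq_zero (Finset.mem_univ k) hk
      simp [h0]
    · push_neg at hz
      have hpos : ∀ k, 0 < p (xs k) := fun k => (hp _).lt_of_ne (Ne.symm (hz k))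
      have hwpos : 0 < ∏ k, p (xs k) := Finset.prod_pos fun k _ => hpos k
      have hlog : Real.logb 2 (∏ k, p (xs k)) = ∑ k, Real.logb 2 (p (xs k)) :=
        Real.logb_prod _ _ fun k _ => hz k
      have hsg : ∑ k, g (xs k) = -Real.logb 2 (∏ k, p (xs k)) - (N : ℝ) * S := by
        rw [hlog, ← Finset.sum_neg_distrib]
        simp only [hg]
        rw [Finset.sum_sub_distrib]
        simp [Finset.sum_const, Finset.card_univ, mul_comm]
      have hbad : ¬((2 : ℝ) ^ (-(N : ℝ) * (S + ε)) ≤ ∏ k, p (xs k) ∧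
          (∏ k, p (xs k)) ≤ (2 : ℝ) ^ (-(N : ℝ) * (S - ε))) := by
        intro h
        apply hxs
        rw [hT]
        simp only [typicalSet, Finset.mem_filter, Finset.mem_univ, true_and]
        exact h
      have habs : (N : ℝ) * ε ≤ |∑ k, g (xs k)| := by
        rcases not_and_or.mp hbad with h | h
        · push_neg at h
          have hlow : Real.logb 2 (∏ k, p (xs k)) < -(N : ℝ) * (S + ε) :=
            (Real.logb_lt_iff_lt_rpow one_lt_two hwpos).mpr h
          have : (N : ℝ) * ε ≤ ∑ k, g (xs k) := by rw [hsg]; nlinarith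
          exact le_trans this (le_abs_self _)
        · push_neg at h
          have hup : -(N : ℝ) * (S - ε) < Real.logb 2 (∏ k, p (xs k)) :=
            (Real.lt_logb_iff_rpow_lt one_lt_two hwpos).mpr h
          have : (N : ℝ) * ε ≤ -(∑ k, g (xs k)) := by rw [hsg]; nlinarith
          exact le_trans this (neg_le_abs _)
      have hsq : ((N : ℝ) * ε) ^ 2 ≤ (∑ k, g (xs k)) ^ 2 := by
        rw [← sq_abs (∑ k, g (xs k))]
        exact pow_le_pow_left₀ (by positivity) habs 2
      calc (N : ℝ) ^ 2 * ε ^ 2 * (∏ k, p (xs k))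
          = (∏ m, p (xs m)) * ((N : ℝ) * ε) ^ 2 := by ring
        _ ≤ (∏ m, p (xs m)) * (∑ k, g (xs k)) ^ 2 :=
            mul_le_mul_of_nonneg_left hsq hwpos.le
  have hTc : ∑ xs ∈ Tᶜ, ∏ k, p (xs k) ≤ δ := by
    have h1 : (N : ℝ) ^ 2 * ε ^ 2 * ∑ xs ∈ Tᶜ, ∏ k, p (xs k)
        ≤ ∑ xs ∈ Tᶜ, (∏ m, p (xs m)) * (∑ k, g (xs k)) ^ 2 := by
      rw [Finset.mul_sum]
      exact Finset.sum_le_sum fun xs hxs => key xs (Finset.mem_compl.mp hxs)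
    have h2 : ∑ xs ∈ Tᶜ, (∏ m, p (xs m)) * (∑ k, g (xs k)) ^ 2 ≤ (N : ℝ) * V := by
      rw [← hvar]
      exact Finset.sum_le_sum_of_subset_of_nonneg (Finset.subset_univ _)
        fun xs _ _ => mul_nonneg (Finset.prod_nonneg fun k _ => hp _) (sq_nonneg _)
    have h3 : (N : ℝ) * V ≤ (N : ℝ) ^ 2 * ε ^ 2 * δ := by nlinarith
    have h4 := le_trans h1 (le_trans h2 h3)
    exact le_of_mul_le_mul_left h4 (by positivity)
  have hsplit := Finset.sum_add_sum_compl T (fun xs => ∏ k, p (xs k))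
  rw [total] at hsplit
  linarith

theorem typical_subspace_high_probability (d : ℕ)
    (ρ : Matrix (Fin d) (Fin d) ℂ) (hρ : ρ.PosSemidef) (htr : ρ.trace = 1)
    (p : Fin d → ℝ) (v : Fin d → (Fin d → ℂ))
    (honb : ∀ x y, star (v x) ⬝ᵥ v y = if x = y then 1 else 0)
    (hspec : ρ = ∑ x, (p x : ℂ) • Matrix.vecMulVec (v x) (star (v x)))
    (S : ℝ) (hS : S = -∑ x, p x * Real.logb 2 (p x))
    (ε δ : ℝ) (hε : 0 < ε) (hδ : 0 < δ) :
    ∃ N₀ : ℕ, ∀ N ≥ N₀,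
      1 - δ ≤ ((typProj v (typicalSet p S N ε) * tpow ρ N).trace).re := by
  classical
  have entry : ∀ j i, ρ j i = ∑ y, (p y : ℂ) * (v y j * star (v y i)) := by
    intro j i
    rw [hspec]
    simp [Matrix.sum_apply, vecMulVec_apply, mul_assoc]
  have hcc : ∀ x : Fin d, (∑ i, ∑ j, v x i * star (v x j) * ρ j i) = (p x : ℂ) := by
    intro x
    have h1 : ∀ y, (∑ j, star (v x j) * v y j) = if x = y then 1 else 0 := by
      intro y
      rw [← honb x y]
      simp [dotProduct]
    have h2 : ∀ y, (∑ i, star (v y i) * v x i) = if y = x then 1 else 0 := by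
      intro y
      rw [← honb y x]
      simp [dotProduct]
    calc (∑ i, ∑ j, v x i * star (v x j) * ρ j i)
        = ∑ i, ∑ j, ∑ y, (p y : ℂ) * (star (v x j) * v y j) * (star (v y i) * v x i) := by
          refine Finset.sum_congr rfl fun i _ => Finset.sum_congr rfl fun j _ => ?_
          rw [entry j i, Finset.mul_sum]
          exact Finset.sum_congr rfl fun y _ => by ring
      _ = ∑ i, ∑ y, ∑ j, (p y : ℂ) * (star (v x j) * v y j) * (star (v y i) * v x i) :=
          Finset.sum_congr rfl fun i _ => Finset.sum_comm
      _ = ∑ y, ∑ i, ∑ j, (p y : ℂ) * (star (v x j) * v y j) * (star (v y i) * v x i) :=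
          Finset.sum_comm
      _ = ∑ y, ∑ j, ∑ i, (p y : ℂ) * (star (v x j) * v y j) * (star (v y i) * v x i) :=
          Finset.sum_congr rfl fun y _ => Finset.sum_comm
      _ = ∑ y, (p y : ℂ) * (∑ j, star (v x j) * v y j) * (∑ i, star (v y i) * v x i) := by
          refine Finset.sum_congr rfl fun y _ => ?_
          rw [mul_assoc, Finset.sum_mul_sum]
          simp only [Finset.mul_sum]
          exact Finset.sum_congr rfl fun j _ => Finset.sum_congr rfl fun i _ => by ring
      _ = ∑ y, (p y : ℂ) * (if x = y then 1 else 0) * (if y = x then 1 else 0) := by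
          refine Finset.sum_congr rfl fun y _ => ?_
          rw [h1 y, h2 y]
      _ = (p x : ℂ) := by
          simp [mul_ite, ite_mul, Finset.sum_ite_eq]
  have hpv : ∀ x, star (v x) ⬝ᵥ ρ *ᵥ v x = (p x : ℂ) := by
    intro x
    rw [← hcc x]
    simp only [dotProduct, Matrix.mulVec, Pi.star_apply]
    rw [Finset.sum_comm]
    refine Finset.sum_congr rfl fun j _ => ?_
    rw [Finset.mul_sum]
    refine Finset.sum_congr rfl fun i _ => by ring
  have hp : ∀ x, 0 ≤ p x := by
    intro x
    have h0 := hρ.dotProduct_mulVec_nonneg (v x)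
    rw [hpv x] at h0
    exact Complex.zero_le_real.mp h0
  have hsum : ∑ x, p x = 1 := by
    have htrv : ∀ x : Fin d, (Matrix.vecMulVec (v x) (star (v x))).trace = 1 := by
      intro x
      have h := honb x x
      rw [if_pos rfl] at h
      rw [← h]
      simp [Matrix.trace, Matrix.diag, vecMulVec_apply, dotProduct, mul_comm]
    have hone : (↑(∑ x, p x) : ℂ) = 1 := by
      push_cast
      rw [← htr, hspec, Matrix.trace_sum]
      exact (Finset.sum_congr rfl fun x _ => by
        rw [Matrix.trace_smul, htrv x, smul_eq_mul, mul_one]).symm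
    exact_mod_cast hone
  have htrace : ∀ N : ℕ, (typProj v (typicalSet p S N ε) * tpow ρ N).trace
      = ((∑ xs ∈ typicalSet p S N ε, ∏ k, p (xs k) : ℝ) : ℂ) := by
    intro N
    have h2 : ∀ xs : Fin N → Fin d,
        ((Matrix.of fun a b : Fin N → Fin d => ∏ k, v (xs k) (a k) * star (v (xs k) (b k)))
            * tpow ρ N).trace
          = ∏ k, (p (xs k) : ℂ) := by
      intro xs
      calc ((Matrix.of fun a b : Fin N → Fin d =>
              ∏ k, v (xs k) (a k) * star (v (xs k) (b k))) * tpow ρ N).trace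
          = ∑ a : Fin N → Fin d, ∑ b : Fin N → Fin d,
              (∏ k, v (xs k) (a k) * star (v (xs k) (b k))) * ∏ k, ρ (b k) (a k) := by
            simp [Matrix.trace, Matrix.diag, Matrix.mul_apply, tpow]
        _ = ∑ a : Fin N → Fin d, ∑ b : Fin N → Fin d,
              ∏ k, (v (xs k) (a k) * star (v (xs k) (b k)) * ρ (b k) (a k)) := by
            refine Finset.sum_congr rfl fun a _ => Finset.sum_congr rfl fun b _ => ?_
            rw [← Finset.prod_mul_distrib]
        _ = ∑ a : Fin N → Fin d, ∏ k, (∑ j, v (xs k) (a k) * star (v (xs k) j) * ρ j (a k)) := by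
            refine Finset.sum_congr rfl fun a _ => ?_
            rw [sum_prod_fun (fun k j => v (xs k) (a k) * star (v (xs k) j) * ρ j (a k))]
        _ = ∏ k, ∑ i, ∑ j, v (xs k) i * star (v (xs k) j) * ρ j i := by
            rw [sum_prod_fun (fun k i => ∑ j, v (xs k) i * star (v (xs k) j) * ρ j i)]
        _ = ∏ k, (p (xs k) : ℂ) := Finset.prod_congr rfl fun k _ => hcc (xs k)
    rw [typProj, Finset.sum_mul, Matrix.trace_sum,
      Finset.sum_congr rfl fun xs _ => h2 xs]
    push_cast
    rfl
  obtain ⟨N₀, hN₀⟩ := aep p hp hsum S hS ε δ hε hδ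
  refine ⟨N₀, fun N hN => ?_⟩
  rw [htrace N, Complex.ofReal_re]
  exact hN₀ N hN
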